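/- Let ℓ be a prime number and a ≥ 1 a natural number. Then there exists a natural number N₀ such that for every N ≥ N₀ and every natural number δ with 1 ≤ δ ≤ a, the binomial coefficient C((ℓ−1)·ℓ^N − 1 − (ℓ−1)·δ, δ) is divisible by ℓ. -/

import Mathlib

lemma key_dvd (l : ℕ) (hℓ : (l + 1).Prime) (δ : ℕ) : ∀ c N : ℕ, 1 ≤ δ → 1 ≤ c →
    l * δ + 1 ≤ (l + 1) ^ N → (l + 1) ∣ Nat.choose (c * (l + 1) ^ N - (1 + l * δ)) δ := by
  haveI := Fact.mk hℓ
  induction δ using Nat.strong_induction_on with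
  | _ δ ih =>
  intro c N hδ hc hval
  have hl : 1 ≤ l := by
    have := hℓ.two_le; omega
  have hN : 1 ≤ N := by
    rcases Nat.eq_zero_or_pos N with h | h
    · subst h; simp at hval
      have : 1 ≤ l * δ := Nat.one_le_iff_ne_zero.mpr (by positivity)
      omega
    · exact h
  set P := (l + 1) ^ (N - 1) with hPdef
  have hP : (l + 1) ^ N = (l + 1) * P := by
    rw [hPdef, ← pow_succ']
    congr 1
    omega
  have hPpos : 1 ≤ P := Nat.one_le_iff_ne_zero.mpr (by positivity)
  set d₀ := δ % (l + 1) with hd₀def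
  set δ' := δ / (l + 1) with hδ'def
  have hδeq : δ = (l + 1) * δ' + d₀ := (Nat.div_add_mod δ (l + 1)).symm
  have hd₀lt : d₀ < l + 1 := Nat.mod_lt _ (by omega)
  have hval2 : l * δ + 1 ≤ (l + 1) * P := by rw [← hP]; exact hval
  -- inner validity
  have e1 : (l + 1) * (l * δ' + d₀) = l * δ + d₀ := by
    rw [hδeq]; ring
  have h2 : (l + 1) * (l * δ' + d₀) < (l + 1) * (P + 1) := by
    have e2 : (l + 1) * (P + 1) = (l + 1) * P + (l + 1) := by ring
    omega
  have hin : l * δ' + d₀ ≤ P := by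
    have := Nat.lt_of_mul_lt_mul_left h2
    omega
  have hcP : P ≤ c * P := Nat.le_mul_of_pos_left P hc
  have hcond : 1 + l * δ ≤ c * (l + 1) * P := by
    have : (l + 1) * P ≤ c * ((l + 1) * P) := Nat.le_mul_of_pos_left _ hc
    have e3 : c * ((l + 1) * P) = c * (l + 1) * P := by ring
    omega
  -- Lucas one step
  have lucas := Choose.choose_modEq_choose_mod_mul_choose_div_nat (p := l + 1) (n := c * (l + 1) ^ N - (1 + l * δ)) (k := δ)
  rcases Nat.eq_zero_or_pos d₀ with hd0 | hd0
  · -- d₀ = 0 : recurse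
    have hδ'pos : 1 ≤ δ' := by
      rcases Nat.eq_zero_or_pos δ' with h | h
      · rw [h, hd0] at hδeq; simp at hδeq; omega
      · exact h
    have hδ'lt : δ' < δ := by
      have e4 : (l + 1) * δ' = δ' + l * δ' := by ring
      have e5 : δ' ≤ l * δ' := Nat.le_mul_of_pos_left δ' hl
      omega
    have hin' : l * δ' + 1 ≤ P := by
      rcases Nat.lt_or_ge (l * δ') P with h | h
      · omega
      · exfalso
        have hle : l * δ' = P := by omega
        have e6 : (l + 1) * (l * δ') = l * δ := by rw [hδeq, hd0]; ring
        have : (l + 1) * (l * δ') = (l + 1) * P := by rw [hle]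
        omega
    set q := c * P - (1 + l * δ') with hqdef
    have hq : 1 + l * δ' ≤ c * P := by omega
    have hδeq' : (δ : ℤ) = (l + 1) * δ' + d₀ := by exact_mod_cast hδeq
    have hd0' : (d₀ : ℤ) = 0 := by exact_mod_cast hd0
    have hcond2 : 1 + l * δ ≤ c * ((l + 1) * P) := by
      have e3 : c * ((l + 1) * P) = c * (l + 1) * P := by ring
      omega
    have neq : c * (l + 1) ^ N - (1 + l * δ) = (l + 1) * q + l := by
      rw [hP, hqdef]
      zify [hq, hcond2]
      rw [hδeq', hd0']
      ring
    have hdiv : (c * (l + 1) ^ N - (1 + l * δ)) / (l + 1) = q := by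
      rw [neq, Nat.mul_add_div (by omega)]
      simp [Nat.div_eq_of_lt (show l < l + 1 by omega)]
    have hmod : (c * (l + 1) ^ N - (1 + l * δ)) % (l + 1) = l := by
      rw [neq, Nat.mul_add_mod]
      exact Nat.mod_eq_of_lt (by omega)
    have hrec : (l + 1) ∣ Nat.choose q δ' := by
      have := ih δ' hδ'lt c (N - 1) hδ'pos hc (by rw [← hPdef] at *; exact hin')
      rwa [hqdef]
    have hX : (l + 1) ∣ Nat.choose ((c * (l + 1) ^ N - (1 + l * δ)) % (l + 1)) (δ % (l + 1)) *
        Nat.choose ((c * (l + 1) ^ N - (1 + l * δ)) / (l + 1)) (δ / (l + 1)) := by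
      rw [hdiv, ← hδ'def]
      exact Dvd.dvd.mul_left hrec _
    exact (Nat.modEq_zero_iff_dvd).mp (lucas.trans (Nat.modEq_zero_iff_dvd.mpr hX))
  · -- d₀ ≥ 1 : bottom digit kills it
    set q := c * P - (l * δ' + d₀) with hqdef
    have hq : l * δ' + d₀ ≤ c * P := le_trans hin hcP
    have hδeq' : (δ : ℤ) = (l + 1) * δ' + d₀ := by exact_mod_cast hδeq
    have hcond2 : 1 + l * δ ≤ c * ((l + 1) * P) := by
      have e3 : c * ((l + 1) * P) = c * (l + 1) * P := by ring
      omega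
    have neq : c * (l + 1) ^ N - (1 + l * δ) = (l + 1) * q + (d₀ - 1) := by
      rw [hP, hqdef]
      zify [hq, hcond2, (show 1 ≤ d₀ by omega)]
      rw [hδeq']
      ring
    have hmod : (c * (l + 1) ^ N - (1 + l * δ)) % (l + 1) = d₀ - 1 := by
      rw [neq, Nat.mul_add_mod]
      exact Nat.mod_eq_of_lt (by omega)
    have hX : (l + 1) ∣ Nat.choose ((c * (l + 1) ^ N - (1 + l * δ)) % (l + 1)) (δ % (l + 1)) *
        Nat.choose ((c * (l + 1) ^ N - (1 + l * δ)) / (l + 1)) (δ / (l + 1)) := by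
      rw [hmod, ← hd₀def, Nat.choose_eq_zero_of_lt (by omega), zero_mul]
      exact dvd_zero _
    exact (Nat.modEq_zero_iff_dvd).mp (lucas.trans (Nat.modEq_zero_iff_dvd.mpr hX))

/-- Let `ℓ` be prime and `a ≥ 1`. Then there exists `N₀` such that for
every `N ≥ N₀` and every `δ` with `1 ≤ δ ≤ a`, the binomial coefficient
`C((ℓ−1)·ℓ^N − 1 − (ℓ−1)·δ, δ)` is divisible by `ℓ`. -/
theorem stmt_7 (ℓ : ℕ) (hℓ : ℓ.Prime) (a : ℕ) (ha : 1 ≤ a) :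
    ∃ N₀ : ℕ, ∀ N : ℕ, N₀ ≤ N → ∀ δ : ℕ, 1 ≤ δ → δ ≤ a →
      ℓ ∣ Nat.choose ((ℓ - 1) * ℓ ^ N - 1 - (ℓ - 1) * δ) δ := by
  obtain ⟨l, rfl⟩ : ∃ l, ℓ = l + 1 := ⟨ℓ - 1, by have := hℓ.two_le; omega⟩
  refine ⟨l * a + 1, fun N hN δ hδ1 hδa => ?_⟩
  have hl : 1 ≤ l := by have := hℓ.two_le; omega
  have hval : l * δ + 1 ≤ (l + 1) ^ N := by
    have h1 : l * δ ≤ l * a := Nat.mul_le_mul_left l hδa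
    have h2 : N < (l + 1) ^ N := Nat.lt_pow_self (by omega)
    omega
  have := key_dvd l hℓ δ (l + 1 - 1) N hδ1 (by omega) hval
  rw [Nat.sub_sub]
  simpa using this
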